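/- Let ρ ∈ (0,∞). Then f_ρ(1,r) = g_ρ(1,−r) for every r ∈ ℝ; moreover, for every ε > 0 there exists r₀ > 0 such that f_ρ(1,r) ≤ exp(−2|r|(1−ε)) and g_ρ(1,r) ≤ exp(−2|r|(1−ε)) whenever |r| ≥ r₀. -/

import Mathlib

open Real MeasureTheory Filter Set

noncomputable section

/-- `S` is the (unique) solution of the ODE
`S'(u) = -8ρ S(u)^{1+ρ}/(1+S(u)^ρ)²` with `S(0) = x`, valued in `(0,∞)`. -/
def IsSsol (ρ x : ℝ) (S : ℝ → ℝ) : Prop :=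
  (∀ u : ℝ, 0 < S u) ∧ S 0 = x ∧
    ∀ u : ℝ, HasDerivAt S (-(8 * ρ * S u ^ (1 + ρ)) / (1 + S u ^ ρ) ^ 2) u

/-- `f_ρ(x,·)`, expressed in terms of the solution `S = S_ρ(x,·)`. -/
def fRho (ρ : ℝ) (S : ℝ → ℝ) (r : ℝ) : ℝ :=
  Real.exp (2 * ∫ u in (0:ℝ)..r, (1 - 2 * (1 + (1 - ρ) * S u ^ ρ) / (1 + S u ^ ρ) ^ 2))

/-- `g_ρ(x,·)`, expressed in terms of the solution `S = S_ρ(x,·)`. -/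
def gRho (ρ x : ℝ) (S : ℝ → ℝ) (r : ℝ) : ℝ :=
  x * Real.exp (-2 * ∫ u in (0:ℝ)..r,
      (1 - 2 * ((1 - ρ) * S u ^ ρ + S u ^ (2 * ρ)) / (1 + S u ^ ρ) ^ 2))


def Hhat (ρ q : ℝ) : ℝ := (q⁻¹ - q) / (8 * ρ ^ 2) - Real.log q / (4 * ρ ^ 2)

lemma Hhat_strictAntiOn {ρ : ℝ} (hρ : 0 < ρ) : StrictAntiOn (Hhat ρ) (Ioi 0) := by
  intro a ha b hb hab
  have h1 : b⁻¹ - b < a⁻¹ - a := sub_lt_sub (inv_strictAnti₀ ha hab) hab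
  have h2 : Real.log a < Real.log b := Real.log_lt_log ha hab
  have c1 : (0:ℝ) < 8 * ρ ^ 2 := by positivity
  have c2 : (0:ℝ) < 4 * ρ ^ 2 := by positivity
  unfold Hhat
  have := sub_lt_sub (div_lt_div_of_pos_right h1 c1) (div_lt_div_of_pos_right h2 c2)
  linarith [this]

lemma Hhat_inv {ρ q : ℝ} (hq : 0 < q) : Hhat ρ q⁻¹ = -Hhat ρ q := by
  unfold Hhat; rw [inv_inv, Real.log_inv]; ring

lemma Hhat_one (ρ : ℝ) : Hhat ρ 1 = 0 := by simp [Hhat]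

section Core
variable {ρ : ℝ} (hρ : 0 < ρ) {p : ℝ → ℝ} (hp : ∀ u, 0 < p u)
  (hp' : ∀ u, HasDerivAt p (-(8 * ρ ^ 2 * p u ^ 2) / (1 + p u) ^ 2) u)

include hρ hp hp'

lemma p_cont : Continuous p := by
  have : Differentiable ℝ p := fun u => (hp' u).differentiableAt
  exact this.continuous

lemma combo_hasDerivAt (c1 c2 c3 u : ℝ) :
    HasDerivAt (fun u => c1 * p u + c2 * (p u)⁻¹ + c3 * Real.log (p u))
      ((c1 - c2 * ((p u)⁻¹)^2 + c3 * (p u)⁻¹) * (-(8 * ρ ^ 2 * p u ^ 2) / (1 + p u) ^ 2)) u := by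
  have h1 := (hp' u).const_mul c1
  have h2 := ((hp' u).inv (hp u).ne').const_mul c2
  have h3 := ((hp' u).log (hp u).ne').const_mul c3
  have := (h1.add h2).add h3
  refine this.congr_deriv ?_
  have hpne := (hp u).ne'
  have hdne : (1 + p u) ≠ 0 := by have := hp u; positivity
  ring
end Core

section Core2
variable {ρ : ℝ} (hρ : 0 < ρ) {p : ℝ → ℝ} (hp : ∀ u, 0 < p u) (hp0 : p 0 = 1)
  (hp' : ∀ u, HasDerivAt p (-(8 * ρ ^ 2 * p u ^ 2) / (1 + p u) ^ 2) u)

include hρ hp hp' hp0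

lemma FA_int (r : ℝ) :
    ∫ u in (0:ℝ)..r, (1 - 2 * (1 + (1 - ρ) * p u) / (1 + p u) ^ 2)
      = (2 - p r - (p r)⁻¹) / (8 * ρ ^ 2) - Real.log (p r) / (4 * ρ) := by
  set c1 : ℝ := -(1/(8*ρ^2)) with hc1
  set c3 : ℝ := -(1/(4*ρ)) with hc3
  have hder : ∀ u ∈ uIcc (0:ℝ) r,
      HasDerivAt (fun u => c1 * p u + c1 * (p u)⁻¹ + c3 * Real.log (p u))
        (1 - 2 * (1 + (1 - ρ) * p u) / (1 + p u) ^ 2) u := by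
    intro u _
    convert combo_hasDerivAt hρ hp hp' c1 c1 c3 u using 1
    have hpne := (hp u).ne'
    have hdne : (1 + p u) ≠ 0 := by have := hp u; positivity
    rw [hc1, hc3]
    have hρne : ρ ≠ 0 := hρ.ne'
    have e1 : ρ^3 * ρ⁻¹ = ρ^2 := by field_simp
    have e2 : ρ^3 * ρ⁻¹^2 = ρ := by rw [pow_two]; field_simp
    field_simp
    try simp only [e1, e2]
    ring
  have hint : IntervalIntegrable (fun u => 1 - 2 * (1 + (1 - ρ) * p u) / (1 + p u) ^ 2)
      volume 0 r := by
    apply Continuous.intervalIntegrable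
    have hpc := p_cont hρ hp hp'
    exact continuous_const.sub (((continuous_const.mul (continuous_const.add
      (continuous_const.mul hpc))).div ((continuous_const.add hpc).pow 2))
      (fun u => by have := hp u; show (1 + p u) ^ 2 ≠ 0; positivity))
  rw [intervalIntegral.integral_eq_sub_of_hasDerivAt hder hint, hp0]
  simp only [hc1, hc3, Real.log_one, inv_one]
  have hpne := (hp r).ne'
  have hρne : ρ ≠ 0 := hρ.ne'
  have e1 : ρ^3 * ρ⁻¹ = ρ^2 := by field_simp
  have e2 : ρ^3 * ρ⁻¹^2 = ρ := by rw [pow_two]; field_simp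
  field_simp
  try simp only [e1, e2]
  ring

lemma FB_int (r : ℝ) :
    ∫ u in (0:ℝ)..r, (1 - 2 * ((1 - ρ) * p u + p u ^ 2) / (1 + p u) ^ 2)
      = (p r + (p r)⁻¹ - 2) / (8 * ρ ^ 2) - Real.log (p r) / (4 * ρ) := by
  set c1 : ℝ := 1/(8*ρ^2) with hc1
  set c3 : ℝ := -(1/(4*ρ)) with hc3
  have hder : ∀ u ∈ uIcc (0:ℝ) r,
      HasDerivAt (fun u => c1 * p u + c1 * (p u)⁻¹ + c3 * Real.log (p u))
        (1 - 2 * ((1 - ρ) * p u + p u ^ 2) / (1 + p u) ^ 2) u := by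
    intro u _
    convert combo_hasDerivAt hρ hp hp' c1 c1 c3 u using 1
    have hpne := (hp u).ne'
    have hdne : (1 + p u) ≠ 0 := by have := hp u; positivity
    rw [hc1, hc3]
    have hρne : ρ ≠ 0 := hρ.ne'
    have e1 : ρ^3 * ρ⁻¹ = ρ^2 := by field_simp
    have e2 : ρ^3 * ρ⁻¹^2 = ρ := by rw [pow_two]; field_simp
    field_simp
    try simp only [e1, e2]
    ring
  have hint : IntervalIntegrable (fun u => 1 - 2 * ((1 - ρ) * p u + p u ^ 2) / (1 + p u) ^ 2)
      volume 0 r := by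
    apply Continuous.intervalIntegrable
    have hpc := p_cont hρ hp hp'
    exact continuous_const.sub (((continuous_const.mul ((continuous_const.mul hpc).add
      (hpc.pow 2))).div ((continuous_const.add hpc).pow 2))
      (fun u => by have := hp u; show (1 + p u) ^ 2 ≠ 0; positivity))
  rw [intervalIntegral.integral_eq_sub_of_hasDerivAt hder hint, hp0]
  simp only [hc1, hc3, Real.log_one, inv_one]
  have hpne := (hp r).ne'
  have hρne : ρ ≠ 0 := hρ.ne'
  have e1 : ρ^3 * ρ⁻¹ = ρ^2 := by field_simp
  have e2 : ρ^3 * ρ⁻¹^2 = ρ := by rw [pow_two]; field_simp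
  field_simp
  try simp only [e1, e2]
  ring

lemma HS_eq (u : ℝ) : Hhat ρ (p u) = u := by
  set c1 : ℝ := -(1/(8*ρ^2)) with hc1
  set c2 : ℝ := 1/(8*ρ^2) with hc2
  set c3 : ℝ := -(1/(4*ρ^2)) with hc3
  have hG : ∀ u, HasDerivAt (fun u => c1 * p u + c2 * (p u)⁻¹ + c3 * Real.log (p u)) 1 u := by
    intro u
    convert combo_hasDerivAt hρ hp hp' c1 c2 c3 u using 1
    have hpne := (hp u).ne'
    have hdne : (1 + p u) ≠ 0 := by have := hp u; positivity
    rw [hc1, hc2, hc3]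
    have hρne : ρ ≠ 0 := hρ.ne'
    have e1 : ρ^3 * ρ⁻¹ = ρ^2 := by field_simp
    have e2 : ρ^3 * ρ⁻¹^2 = ρ := by rw [pow_two]; field_simp
    field_simp
    try simp only [e1, e2]
    ring
  have hconst : ∀ v : ℝ, (c1 * p v + c2 * (p v)⁻¹ + c3 * Real.log (p v)) - v
      = (c1 * p 0 + c2 * (p 0)⁻¹ + c3 * Real.log (p 0)) - 0 := by
    intro v
    apply is_const_of_deriv_eq_zero (f := fun w => (c1 * p w + c2 * (p w)⁻¹ + c3 * Real.log (p w)) - w)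
    · exact fun w => ((hG w).sub (hasDerivAt_id w)).differentiableAt
    · intro w
      have := ((hG w).sub (hasDerivAt_id w)).deriv
      exact HasDerivAt.deriv (f := fun w => (c1 * p w + c2 * (p w)⁻¹ + c3 * Real.log (p w)) - w)
        (((hG w).sub (hasDerivAt_id' w)).congr_deriv (sub_self 1))
  have h0 := hconst u
  rw [hp0] at h0
  simp only [inv_one, Real.log_one, mul_one, mul_zero, add_zero, sub_zero] at h0
  have hG_eq : c1 * p u + c2 * (p u)⁻¹ + c3 * Real.log (p u) = u := by
    rw [hc1, hc2] at h0 ⊢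
    linarith [h0]
  have hH : Hhat ρ (p u) = c1 * p u + c2 * (p u)⁻¹ + c3 * Real.log (p u) := by
    rw [hc1, hc2, hc3]; unfold Hhat; ring
  rw [hH]
  exact hG_eq

lemma p_sym (u : ℝ) : p (-u) = (p u)⁻¹ := by
  have h1 : Hhat ρ (p (-u)) = -u := HS_eq hρ hp hp0 hp' (-u)
  have h2 : Hhat ρ ((p u)⁻¹) = -u := by
    rw [Hhat_inv (hp u), HS_eq hρ hp hp0 hp' u]
  exact (Hhat_strictAntiOn hρ).injOn (mem_Ioi.2 (hp _)) (mem_Ioi.2 (inv_pos.2 (hp u)))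
    (h1.trans h2.symm)

end Core2



lemma Hhat_nonpos {ρ q : ℝ} (hρ : 0 < ρ) (hq : 1 ≤ q) : Hhat ρ q ≤ 0 := by
  have h1 : q⁻¹ - q ≤ 0 := by
    have : q⁻¹ ≤ 1 := inv_le_one_of_one_le₀ hq
    nlinarith
  have h2 : 0 ≤ Real.log q := Real.log_nonneg hq
  unfold Hhat
  have c1 : (0:ℝ) < 8 * ρ ^ 2 := by positivity
  have c2 : (0:ℝ) < 4 * ρ ^ 2 := by positivity
  have := div_nonpos_of_nonpos_of_nonneg h1 c1.le
  have := div_nonneg h2 c2.le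
  linarith

lemma Hhat_nonneg {ρ q : ℝ} (hρ : 0 < ρ) (hq0 : 0 < q) (hq : q ≤ 1) : 0 ≤ Hhat ρ q := by
  have h1 : 0 ≤ q⁻¹ - q := by
    have : 1 ≤ q⁻¹ := (one_le_inv₀ hq0).mpr hq
    nlinarith
  have h2 : Real.log q ≤ 0 := Real.log_nonpos hq0.le hq
  unfold Hhat
  have c1 : (0:ℝ) < 8 * ρ ^ 2 := by positivity
  have c2 : (0:ℝ) < 4 * ρ ^ 2 := by positivity
  have := div_nonneg h1 c1.le
  have := div_nonpos_of_nonpos_of_nonneg h2 c2.le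
  linarith

lemma exp_quarter_sq {L : ℝ} (hL : 0 ≤ L) : L^2/4 + 1 ≤ Real.exp L := by
  have h := Real.add_one_le_exp (L/2)
  have h2 : Real.exp (L/2) * Real.exp (L/2) = Real.exp L := by
    rw [← Real.exp_add]; ring_nf
  nlinarith [Real.exp_pos (L/2)]

/-- From `L² ≤ 32 ρ² |r|` and `L ≥ 0`, get `L ≤ 6 ρ √|r|`. -/
lemma L_le_sqrt {ρ L s : ℝ} (hρ : 0 < ρ) (hL : 0 ≤ L) (hs : 0 ≤ s)
    (h : L^2 ≤ 32 * ρ^2 * s^2) : L ≤ 6 * ρ * s := by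
  nlinarith [mul_nonneg hρ.le hs, sq_nonneg (ρ*s),
    add_nonneg hL (mul_nonneg (mul_nonneg (by norm_num : (0:ℝ) ≤ 6) hρ.le) hs)]

lemma key_alg_neg (ρ P x : ℝ) (hρ : ρ ≠ 0) :
    2*((2-P-P⁻¹)/(8*ρ^2) - x/(4*ρ))
      = 2*((P⁻¹-P)/(8*ρ^2) - x/(4*ρ^2)) + (1-P⁻¹)/(2*ρ^2) + ((1-ρ)/(2*ρ^2))*x := by
  generalize P⁻¹ = Q
  field_simp
  ring

lemma key_alg_pos (ρ P x : ℝ) (hρ : ρ ≠ 0) :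
    2*((2-P-P⁻¹)/(8*ρ^2) - x/(4*ρ))
      = -(2*((P⁻¹-P)/(8*ρ^2) - x/(4*ρ^2))) + (1-P)/(2*ρ^2) - ((1+ρ)/(2*ρ^2))*x := by
  generalize P⁻¹ = Q
  field_simp
  ring

section Decay
variable {ρ : ℝ} (hρ : 0 < ρ) {p : ℝ → ℝ} (hp : ∀ u, 0 < p u) (hp0 : p 0 = 1)
  (hp' : ∀ u, HasDerivAt p (-(8 * ρ ^ 2 * p u ^ 2) / (1 + p u) ^ 2) u)

include hρ hp hp0 hp'

lemma decay_bounds (r : ℝ) :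
    2 * ((2 - p r - (p r)⁻¹) / (8*ρ^2) - Real.log (p r) / (4*ρ))
      ≤ -(2*|r|) + 1/(2*ρ^2) + ((1+ρ)/(2*ρ^2)) * |Real.log (p r)|
  ∧ |Real.log (p r)|^2 ≤ 32 * ρ^2 * |r| := by
  have hHr : Hhat ρ (p r) = r := HS_eq hρ hp hp0 hp' r
  unfold Hhat at hHr
  have hP : 0 < p r := hp r
  have hρ2 : (0:ℝ) < ρ^2 := by positivity
  rcases lt_trichotomy r 0 with hr|hr|hr
  · -- r < 0 : p r > 1
    have hP1 : 1 < p r := by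
      by_contra hle
      push_neg at hle
      have h0 := Hhat_nonneg hρ hP hle
      unfold Hhat at h0
      linarith
    have hlog : 0 < Real.log (p r) := Real.log_pos hP1
    have habs : |Real.log (p r)| = Real.log (p r) := abs_of_pos hlog
    have habsr : |r| = -r := abs_of_neg hr
    have hPinv : (p r)⁻¹ ≤ 1 := inv_le_one_of_one_le₀ hP1.le
    constructor
    · have key := key_alg_neg ρ (p r) (Real.log (p r)) hρ.ne'
      rw [hHr] at key
      have b1 : (1 - (p r)⁻¹)/(2*ρ^2) ≤ 1/(2*ρ^2) := by
        gcongr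
        have : 0 < (p r)⁻¹ := by positivity
        linarith
      have b2 : ((1-ρ)/(2*ρ^2)) * Real.log (p r) ≤ ((1+ρ)/(2*ρ^2)) * |Real.log (p r)| := by
        rw [habs]
        apply mul_le_mul_of_nonneg_right _ hlog.le
        gcongr
        · linarith
      rw [habsr]
      linarith
    · have hrge : (p r - 1)/(8*ρ^2) ≤ -r := by
        have h1 : (p r - 1)/(8*ρ^2) ≤ (p r - (p r)⁻¹)/(8*ρ^2) := by
          gcongr
        have h2 : 0 ≤ Real.log (p r)/(4*ρ^2) := by positivity
        have h4 : (p r - (p r)⁻¹)/(8*ρ^2) = -(((p r)⁻¹ - p r) / (8 * ρ ^ 2)) := by ring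
        linarith [hHr]
      have hPexp : Real.exp (Real.log (p r)) = p r := Real.exp_log hP
      have hq := exp_quarter_sq hlog.le
      rw [hPexp] at hq
      have h3 : p r - 1 ≤ 8*ρ^2 * (-r) := by
        rw [div_le_iff₀ (by positivity : (0:ℝ) < 8*ρ^2)] at hrge
        linarith
      rw [habs, habsr]
      nlinarith
  · -- r = 0
    subst hr
    rw [hp0]
    simp only [Real.log_one, abs_zero, abs_of_nonneg (le_refl (0:ℝ))]
    constructor
    · have : (0:ℝ) < 1/(2*ρ^2) := by positivity
      norm_num
      positivity
    · norm_num
  · -- r > 0 : p r < 1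
    have hP1 : p r < 1 := by
      by_contra hle
      push_neg at hle
      have h0 := Hhat_nonpos hρ hle
      unfold Hhat at h0
      linarith
    have hlog : Real.log (p r) < 0 := Real.log_neg hP hP1
    have habs : |Real.log (p r)| = -Real.log (p r) := abs_of_neg hlog
    have habsr : |r| = r := abs_of_pos hr
    constructor
    · have key := key_alg_pos ρ (p r) (Real.log (p r)) hρ.ne'
      rw [hHr] at key
      have b1 : (1 - p r)/(2*ρ^2) ≤ 1/(2*ρ^2) := by
        gcongr
        linarith
      rw [habsr, habs]
      linarith
    · have hrge : ((p r)⁻¹ - 1)/(8*ρ^2) ≤ r := by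
        have h1 : ((p r)⁻¹ - 1)/(8*ρ^2) ≤ ((p r)⁻¹ - p r)/(8*ρ^2) := by
          gcongr
        have h2 : 0 ≤ -(Real.log (p r))/(4*ρ^2) := by
          apply div_nonneg _ (by positivity)
          linarith
        have h4 : -(Real.log (p r))/(4*ρ^2) = -(Real.log (p r)/(4*ρ^2)) := by ring
        linarith [hHr]
      have hPexp : Real.exp (-Real.log (p r)) = (p r)⁻¹ := by
        rw [Real.exp_neg, Real.exp_log hP]
      have hq := exp_quarter_sq (by linarith : (0:ℝ) ≤ -Real.log (p r))
      rw [hPexp] at hq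
      have h3 : (p r)⁻¹ - 1 ≤ 8*ρ^2 * r := by
        rw [div_le_iff₀ (by positivity : (0:ℝ) < 8*ρ^2)] at hrge
        linarith
      rw [habs, habsr]
      nlinarith
end Decay


theorem stmt11 (ρ : ℝ) (hρ : 0 < ρ) (S : ℝ → ℝ) (hS : IsSsol ρ 1 S) :
    (∀ r : ℝ, fRho ρ S r = gRho ρ 1 S (-r)) ∧
    ∀ ε : ℝ, 0 < ε → ∃ r₀ : ℝ, 0 < r₀ ∧ ∀ r : ℝ, r₀ ≤ |r| →
      fRho ρ S r ≤ Real.exp (-2 * |r| * (1 - ε)) ∧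
      gRho ρ 1 S r ≤ Real.exp (-2 * |r| * (1 - ε)) := by
  obtain ⟨hpos, hS0, hSd⟩ := hS
  have hp : ∀ u, 0 < S u ^ ρ := fun u => Real.rpow_pos_of_pos (hpos u) ρ
  have hp0 : S 0 ^ ρ = (1:ℝ) := by rw [hS0, Real.one_rpow]
  have hp' : ∀ u, HasDerivAt (fun u => S u ^ ρ)
      (-(8 * ρ ^ 2 * (S u ^ ρ) ^ 2) / (1 + S u ^ ρ) ^ 2) u := by
    intro u
    have h := (hSd u).rpow_const (p := ρ) (Or.inl (hpos u).ne')
    convert h using 1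
    have hs := hpos u
    have hsne := hs.ne'
    have e1 : S u ^ (1 + ρ) = S u * S u ^ ρ := by
      rw [Real.rpow_add hs, Real.rpow_one]
    have e2 : S u ^ (ρ - 1) = S u ^ ρ / S u := by
      rw [Real.rpow_sub hs, Real.rpow_one]
    have hdne : (1 + S u ^ ρ) ≠ 0 := by have := hp u; positivity
    rw [e1, e2]
    field_simp
  -- integral representations
  have hfr : ∀ r, fRho ρ S r
      = Real.exp (2 * ((2 - S r ^ ρ - (S r ^ ρ)⁻¹) / (8 * ρ ^ 2)
          - Real.log (S r ^ ρ) / (4 * ρ))) := by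
    intro r
    unfold fRho
    rw [FA_int hρ hp hp0 hp' r]
  have h2rho : ∀ u : ℝ, S u ^ (2 * ρ) = (S u ^ ρ) ^ 2 := by
    intro u
    rw [mul_comm, Real.rpow_mul (hpos u).le]
    exact Real.rpow_two _
  have hgr : ∀ r, gRho ρ 1 S r
      = Real.exp (-2 * ((S r ^ ρ + (S r ^ ρ)⁻¹ - 2) / (8 * ρ ^ 2)
          - Real.log (S r ^ ρ) / (4 * ρ))) := by
    intro r
    unfold gRho
    rw [one_mul]
    have hcongr : (∫ u in (0:ℝ)..r,
          (1 - 2 * ((1 - ρ) * S u ^ ρ + S u ^ (2 * ρ)) / (1 + S u ^ ρ) ^ 2))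
        = ∫ u in (0:ℝ)..r,
          (1 - 2 * ((1 - ρ) * S u ^ ρ + (S u ^ ρ) ^ 2) / (1 + S u ^ ρ) ^ 2) := by
      apply intervalIntegral.integral_congr
      intro u _
      simp only [h2rho]
    rw [hcongr, FB_int hρ hp hp0 hp' r]
  -- part 1
  have hiden : ∀ r : ℝ, fRho ρ S r = gRho ρ 1 S (-r) := by
    intro r
    rw [hfr r, hgr (-r)]
    have hsym := p_sym hρ hp hp0 hp' r
    rw [hsym, inv_inv, Real.log_inv]
    congr 1
    ring
  refine ⟨hiden, ?_⟩
  intro ε hε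
  set K : ℝ := 3 * (1 + ρ) / ρ with hK
  have hKpos : 0 < K := by rw [hK]; positivity
  refine ⟨max 1 (max (1 / (2 * ρ ^ 2 * ε)) ((K / ε) ^ 2)),
    lt_of_lt_of_le one_pos (le_max_left _ _), ?_⟩
  have hf : ∀ r : ℝ, max 1 (max (1 / (2 * ρ ^ 2 * ε)) ((K / ε) ^ 2)) ≤ |r| →
      fRho ρ S r ≤ Real.exp (-2 * |r| * (1 - ε)) := by
    intro r hr
    obtain ⟨hd1, hd2⟩ := decay_bounds hρ hp hp0 hp' r
    have habs : (0:ℝ) ≤ |r| := abs_nonneg r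
    have hsq : Real.sqrt |r| ^ 2 = |r| := Real.sq_sqrt habs
    have hsnn : 0 ≤ Real.sqrt |r| := Real.sqrt_nonneg _
    have hLb : |Real.log (S r ^ ρ)| ≤ 6 * ρ * Real.sqrt |r| := by
      apply L_le_sqrt hρ (abs_nonneg _) hsnn
      rw [hsq]
      exact hd2
    have hb1 : 1 / (2 * ρ ^ 2) ≤ ε * |r| := by
      have h' : 1 / (2 * ρ ^ 2 * ε) ≤ |r| :=
        le_trans (le_trans (le_max_left _ _) (le_max_right _ _)) hr
      rw [div_le_iff₀ (by positivity)] at h'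
      rw [div_le_iff₀ (by positivity : (0:ℝ) < 2 * ρ ^ 2)]
      nlinarith
    have hb2 : K * Real.sqrt |r| ≤ ε * |r| := by
      have h' : (K / ε) ^ 2 ≤ |r| :=
        le_trans (le_trans (le_max_right _ _) (le_max_right _ _)) hr
      have hKe : K / ε ≤ Real.sqrt |r| := by
        have := Real.sqrt_le_sqrt h'
        rwa [Real.sqrt_sq (by positivity : (0:ℝ) ≤ K / ε)] at this
      have : K ≤ ε * Real.sqrt |r| := by
        rw [div_le_iff₀ hε] at hKe
        linarith
      calc K * Real.sqrt |r| ≤ (ε * Real.sqrt |r|) * Real.sqrt |r| :=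
            mul_le_mul_of_nonneg_right this hsnn
        _ = ε * |r| := by rw [mul_assoc, ← sq, hsq]
    have hcoef : ((1 + ρ) / (2 * ρ ^ 2)) * |Real.log (S r ^ ρ)| ≤ K * Real.sqrt |r| := by
      have h1 : ((1 + ρ) / (2 * ρ ^ 2)) * |Real.log (S r ^ ρ)|
          ≤ ((1 + ρ) / (2 * ρ ^ 2)) * (6 * ρ * Real.sqrt |r|) :=
        mul_le_mul_of_nonneg_left hLb (by positivity)
      have heq : ((1 + ρ) / (2 * ρ ^ 2)) * (6 * ρ * Real.sqrt |r|) = K * Real.sqrt |r| := by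
        rw [hK]
        field_simp
        ring
      linarith
    have hfinal : 2 * ((2 - S r ^ ρ - (S r ^ ρ)⁻¹) / (8 * ρ ^ 2)
        - Real.log (S r ^ ρ) / (4 * ρ)) ≤ -2 * |r| * (1 - ε) := by
      nlinarith [hd1, hb1, hb2, hcoef]
    rw [hfr r]
    exact Real.exp_le_exp.mpr hfinal
  intro r hr
  refine ⟨hf r hr, ?_⟩
  have hg : gRho ρ 1 S r = fRho ρ S (-r) := by rw [hiden (-r), neg_neg]
  rw [hg]
  have := hf (-r) (by rwa [abs_neg])
  rwa [abs_neg] at this
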